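/- For every p ∈ ℝ there exist real numbers μ, β, α, δ with α > |β| and δ > 0 such that, setting γ = √(α² − β²), the three equations μ + δβ/γ = 0, δα²/γ³ = 1, and 3β/(α·√δ·γ) = p all hold. -/
import Mathlib


theorem stmt_17 (p : ℝ) :
    ∃ (μ β α δ : ℝ), |β| < α ∧ 0 < δ ∧
      (let γ := Real.sqrt (α ^ 2 - β ^ 2);
        μ + δ * β / γ = 0 ∧
        δ * α ^ 2 / γ ^ 3 = 1 ∧
        3 * β / (α * Real.sqrt δ * γ) = p) := by
  have hpos : (0:ℝ) < 1 + p ^ 2 / 9 := by positivity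
  set a : ℝ := Real.sqrt (1 + p ^ 2 / 9) with ha
  have ha2 : a ^ 2 = 1 + p ^ 2 / 9 := Real.sq_sqrt hpos.le
  have hapos : 0 < a := Real.sqrt_pos.mpr hpos
  refine ⟨-((1 / (1 + p ^ 2 / 9)) * (p / 3)), p / 3, a, 1 / (1 + p ^ 2 / 9), ?_, by positivity, ?_⟩
  · rw [ha, Real.lt_sqrt (abs_nonneg _), sq_abs]
    nlinarith
  · intro γ
    have hγ : γ = 1 := by
      show Real.sqrt (a ^ 2 - (p / 3) ^ 2) = 1
      rw [ha2, show (1:ℝ) + p ^ 2 / 9 - (p / 3) ^ 2 = 1 by ring, Real.sqrt_one]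
    have hsd : Real.sqrt (1 / (1 + p ^ 2 / 9)) = 1 / a := by
      rw [one_div, one_div, Real.sqrt_inv, ha]
    refine ⟨?_, ?_, ?_⟩
    · rw [hγ]; ring
    · rw [hγ, ha2]; field_simp
    · rw [hγ, hsd]; field_simp
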